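/- arXiv:0910.0408 — 3 statements merged into one kernel-verified Lean document; each statement's English description precedes it below -/
import Mathlib

section
/- For a holomorphic φ : H → H, if z ↦ 1/(z + conj(w)) is viewed as the Szegő kernel, then the kernel K¹(w,z) = ((φ(z) + conj(φ(w))) − λ⁻¹(z + conj(w)))/(z + conj(w)) is positive on H × H, where λ = sup_{z∈H} Re(z)/Re(φ(z)) is assumed finite and positive. -/
noncomputable section
open MeasureTheory Complex Set Filter Topology

/-- The right half-plane. -/
def Hs : Set ℂ := {z | 0 < z.re}

/-- A kernel `K` on `H × H` is positive if all finite quadratic forms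
`∑ cᵢ conj(cⱼ) K(xᵢ, xⱼ)` are nonnegative (real). -/
def PosKernel (K : ℂ → ℂ → ℂ) : Prop :=
  ∀ (n : ℕ) (c : Fin n → ℂ) (x : Fin n → ℂ), (∀ i, x i ∈ Hs) →
    0 ≤ (∑ i, ∑ j, c i * (starRingEnd ℂ) (c j) * K (x i) (x j)).re ∧
    (∑ i, ∑ j, c i * (starRingEnd ℂ) (c j) * K (x i) (x j)).im = 0

/-- The kernel `Kⁿ(w,z) = ((φ(z)+conj(φ(w)))ⁿ − λ⁻ⁿ(z+conj(w))ⁿ)/(z+conj(w))ⁿ`. -/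
def Kn (φ : ℂ → ℂ) (lam : ℝ) (m : ℕ) (w z : ℂ) : ℂ :=
  ((φ z + (starRingEnd ℂ) (φ w))^m - ((lam : ℂ)^m)⁻¹ * (z + (starRingEnd ℂ) w)^m)
    / (z + (starRingEnd ℂ) w)^m

open Metric ComplexConjugate
open scoped ComplexOrder

namespace KOP


set_option maxHeartbeats 1000000

lemma one_sub_ne (x : ℂ) (h : ‖x‖ < 1) : 1 - x ≠ 0 := by
  intro h0
  have : (1 : ℂ) = x := by linear_combination h0
  rw [← this] at h; simp at h

lemma one_add_ne (x : ℂ) (h : ‖x‖ < 1) : 1 + x ≠ 0 := by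
  intro h0
  have : x = -1 := by linear_combination h0
  rw [this] at h; simp at h

lemma normSq_mobius (a w : ℂ) :
    normSq (1 - conj a * w) - normSq (w - a) = (1 - normSq a) * (1 - normSq w) := by
  simp only [Complex.normSq_apply, Complex.sub_re, Complex.sub_im, Complex.mul_re, Complex.mul_im,
    Complex.one_re, Complex.one_im, Complex.conj_re, Complex.conj_im]
  ring

lemma norm_lt_of_normSq_lt {x y : ℂ} (h : normSq x < normSq y) : ‖x‖ < ‖y‖ := by
  rw [Complex.norm_def, Complex.norm_def]
  exact Real.sqrt_lt_sqrt (normSq_nonneg _) h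

lemma normSq_lt_one {x : ℂ} (h : ‖x‖ < 1) : normSq x < 1 := by
  have := Complex.sq_norm x
  have hx : ‖x‖ < 1 := h
  nlinarith [norm_nonneg x]

lemma mobius_lt_one (a w : ℂ) (ha : ‖a‖ < 1) (hw : ‖w‖ < 1) :
    ‖(w - a) / (1 - conj a * w)‖ < 1 := by
  have hne : 1 - conj a * w ≠ 0 := by
    apply one_sub_ne
    rw [norm_mul, RCLike.norm_conj]
    nlinarith [norm_nonneg a, norm_nonneg w]
  rw [norm_div, div_lt_one (norm_pos_iff.mpr hne)]
  apply norm_lt_of_normSq_lt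
  have := normSq_mobius a w
  have h1 : normSq a < 1 := normSq_lt_one ha
  have h2 : normSq w < 1 := normSq_lt_one hw
  nlinarith

lemma key_identity (z w' Bz Bw' p q b b' a a' β γ : ℂ)
    (h1 : p * (1 - b' * Bz) = Bz - b)
    (h2 : q * (1 - b * Bw') = Bw' - b')
    (h3 : β * (z - a) = p * (1 - a' * z))
    (h4 : γ * (w' - a') = q * (1 - a * w'))
    (hzw : 1 - z * w' ≠ 0)
    (hD1 : 1 + b' * p ≠ 0) (hD2 : 1 + b * q ≠ 0)
    (ha1 : 1 - a' * z ≠ 0) (ha2 : 1 - a * w' ≠ 0) :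
    (1 - Bz * Bw') / (1 - z * w')
      = ((1 - b * b') * (1 - a * a')) *
          (((1 + b * q) * (1 - a * w'))⁻¹ * (((1 + b' * p) * (1 - a' * z))⁻¹))
        + (1 - b * b') *
          ((w' - a') / ((1 - a * w') * (1 + b * q)) *
            ((z - a) / ((1 - a' * z) * (1 + b' * p)) *
              ((1 - β * γ) / (1 - z * w')))) := by
  have hBz : Bz * (1 + b' * p) = p + b := by linear_combination -h1
  have hBw : Bw' * (1 + b * q) = q + b' := by linear_combination -h2
  have stepA : (1 - Bz * Bw') * ((1 + b' * p) * (1 + b * q)) = (1 - b * b') * (1 - p * q) := by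
    linear_combination (-(Bw' * (1 + b * q))) * hBz - (p + b) * hBw
  have stepB : (1 - p * q) * ((1 - a' * z) * (1 - a * w'))
      = (1 - a * a') * (1 - z * w') + (z - a) * (w' - a') * (1 - β * γ) := by
    linear_combination (γ * (w' - a')) * h3 + (p * (1 - a' * z)) * h4
  have e1 : (1 - Bz * Bw') / (1 - z * w')
      = ((1 - b * b') * (1 - p * q)) / ((1 + b' * p) * (1 + b * q) * (1 - z * w')) := by
    rw [div_eq_div_iff hzw (mul_ne_zero (mul_ne_zero hD1 hD2) hzw)]
    linear_combination (1 - z * w') * stepA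
  rw [e1]
  have t1 : (1-b*b')*(1-a*a') * ((((1:ℂ)+b*q)*(1-a*w'))⁻¹ * ((1+b'*p)*(1-a'*z))⁻¹)
      = ((1-b*b')*(1-a*a')) / (((1+b*q)*(1-a*w')) * ((1+b'*p)*(1-a'*z))) := by
    simp only [div_eq_mul_inv, mul_inv]
  have t2 : (w'-a')/((1-a*w')*((1:ℂ)+b*q)) * ((z-a)/((1-a'*z)*(1+b'*p)) * ((1-β*γ)/(1-z*w')))
      = ((w'-a')*((z-a)*(1-β*γ))) / (((1-a*w')*(1+b*q)) * (((1-a'*z)*(1+b'*p)) * (1-z*w'))) := by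
    rw [div_mul_div_comm, div_mul_div_comm]
  rw [t1, t2, mul_div_assoc']
  have hd1 : ((1:ℂ)+b*q)*(1-a*w') * ((1+b'*p)*(1-a'*z)) ≠ 0 :=
    mul_ne_zero (mul_ne_zero hD2 ha2) (mul_ne_zero hD1 ha1)
  have hd2 : ((1:ℂ)-a*w')*(1+b*q) * (((1-a'*z)*(1+b'*p)) * (1-z*w')) ≠ 0 :=
    mul_ne_zero (mul_ne_zero ha2 hD2) (mul_ne_zero (mul_ne_zero ha1 hD1) hzw)
  rw [div_add_div _ _ hd1 hd2]
  rw [div_eq_div_iff (mul_ne_zero (mul_ne_zero hD1 hD2) hzw) (mul_ne_zero hd1 hd2)]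
  linear_combination ((1-b*b') * ((1+b'*p)*(1+b*q)*(1-z*w')) * ((1+b*q)*(1-a*w')*(1+b'*p)*(1-a'*z))) * stepB

lemma sum_rank_one {n : ℕ} (c g : Fin n → ℂ) :
    0 ≤ ∑ i, ∑ j, c i * conj (c j) * (conj (g i) * g j) := by
  have key : (∑ i, ∑ j, c i * conj (c j) * (conj (g i) * g j))
      = conj (∑ j, conj (c j) * g j) * (∑ j, conj (c j) * g j) := by
    rw [map_sum, Finset.sum_mul]
    refine Finset.sum_congr rfl fun i _ => ?_
    rw [Finset.mul_sum]
    refine Finset.sum_congr rfl fun j _ => ?_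
    simp only [map_mul, Complex.conj_conj]
    ring
  rw [key]
  simpa only [starRingEnd_apply] using star_mul_self_nonneg (∑ j, conj (c j) * g j)

lemma disk_pick : ∀ (n : ℕ) (B : ℂ → ℂ), DifferentiableOn ℂ B (ball (0:ℂ) 1) →
    (∀ z ∈ ball (0:ℂ) 1, ‖B z‖ ≤ 1) →
    ∀ (u c : Fin n → ℂ), (∀ i, u i ∈ ball (0:ℂ) 1) →
    0 ≤ ∑ i, ∑ j, c i * conj (c j) *
        ((1 - B (u j) * conj (B (u i))) / (1 - u j * conj (u i))) := by
  intro n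
  induction n with
  | zero =>
    intro B _ _ u c _
    simp
  | succ n IH =>
    intro B hBd hB1 u c hu
    have hun : ∀ i, ‖u i‖ < 1 := fun i => mem_ball_zero_iff.mp (hu i)
    by_cases hstrict : ∀ z ∈ ball (0:ℂ) 1, ‖B z‖ < 1
    · -- Schur reduction case
      set u₀ := u 0 with hu₀def
      have hu₀ : u₀ ∈ ball (0:ℂ) 1 := hu 0
      have hu₀n : ‖u₀‖ < 1 := hun 0
      set b₀ := B u₀ with hb₀def
      have hb₀ : ‖b₀‖ < 1 := hstrict _ hu₀
      set h : ℂ → ℂ := fun z => (B z - b₀) / (1 - conj b₀ * B z) with hh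
      have hden : ∀ z ∈ ball (0:ℂ) 1, 1 - conj b₀ * B z ≠ 0 := by
        intro z hz
        apply one_sub_ne
        rw [norm_mul, RCLike.norm_conj]
        nlinarith [norm_nonneg b₀, norm_nonneg (B z), hstrict z hz]
      have hhd : DifferentiableOn ℂ h (ball (0:ℂ) 1) := by
        apply DifferentiableOn.div (hBd.sub (differentiableOn_const b₀))
          ((differentiableOn_const 1).sub ((differentiableOn_const (conj b₀)).mul hBd)) hden
      have hh0 : h u₀ = 0 := by simp [hh, hb₀def]
      have hhlt : ∀ z ∈ ball (0:ℂ) 1, ‖h z‖ < 1 := fun z hz =>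
        mobius_lt_one b₀ (B z) hb₀ (hstrict z hz)
      -- Schwarz–Pick inequality for h at u₀
      set M : ℂ → ℂ := fun ζ => (ζ + u₀) / (1 + conj u₀ * ζ) with hM
      have hMball : ∀ ζ ∈ ball (0:ℂ) 1, M ζ ∈ ball (0:ℂ) 1 := by
        intro ζ hζ
        rw [mem_ball_zero_iff]
        have := mobius_lt_one (-u₀) ζ (by simpa using hu₀n) (mem_ball_zero_iff.mp hζ)
        simpa [hM, sub_neg_eq_add, map_neg] using this
      have hMdenom : ∀ ζ ∈ ball (0:ℂ) 1, 1 + conj u₀ * ζ ≠ 0 := by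
        intro ζ hζ
        apply one_add_ne
        rw [norm_mul, RCLike.norm_conj]
        nlinarith [norm_nonneg u₀, norm_nonneg ζ, mem_ball_zero_iff.mp hζ]
      have hMd : DifferentiableOn ℂ M (ball (0:ℂ) 1) :=
        DifferentiableOn.div (differentiableOn_id.add (differentiableOn_const u₀))
          ((differentiableOn_const 1).add ((differentiableOn_const (conj u₀)).mul
            differentiableOn_id)) hMdenom
      have hM0 : M 0 = u₀ := by simp [hM]
      have hG0 : (h ∘ M) 0 = 0 := by simp [Function.comp, hM0, hh0]
      have hGd : DifferentiableOn ℂ (h ∘ M) (ball (0:ℂ) 1) :=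
        hhd.comp hMd hMball
      have hGmaps : Set.MapsTo (h ∘ M) (ball (0:ℂ) 1) (ball (0:ℂ) 1) := by
        intro ζ hζ
        exact mem_ball_zero_iff.mpr (hhlt _ (hMball ζ hζ))
      have hSP : ∀ z ∈ ball (0:ℂ) 1, ‖h z‖ * ‖1 - conj u₀ * z‖ ≤ ‖z - u₀‖ := by
        intro z hz
        have hz1 : ‖z‖ < 1 := mem_ball_zero_iff.mp hz
        have hdz : 1 - conj u₀ * z ≠ 0 := by
          apply one_sub_ne
          rw [norm_mul, RCLike.norm_conj]
          nlinarith [norm_nonneg u₀, norm_nonneg z]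
        set ζ := (z - u₀) / (1 - conj u₀ * z) with hζdef
        have hζ : ζ ∈ ball (0:ℂ) 1 := mem_ball_zero_iff.mpr (mobius_lt_one u₀ z hu₀n hz1)
        have hMζ : M ζ = z := by
          rw [hM, hζdef]
          have hnu : (1:ℂ) - conj u₀ * u₀ ≠ 0 := by
            apply one_sub_ne
            rw [norm_mul, RCLike.norm_conj]
            nlinarith [norm_nonneg u₀]
          have hnu2 : (1:ℂ) - u₀ * conj u₀ ≠ 0 := by
            rw [mul_comm]; exact hnu
          show ((z - u₀) / (1 - conj u₀ * z) + u₀) / (1 + conj u₀ * ((z - u₀) / (1 - conj u₀ * z))) = z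
          rw [div_add' _ _ _ hdz, mul_div_assoc', one_add_div hdz, div_div_div_cancel_right₀ hdz,
            div_eq_iff (by intro h0; exact hnu (by linear_combination h0))]
          ring
        have := Complex.norm_le_norm_of_mapsTo_ball hGd (hGmaps.mono_right ball_subset_closedBall) hG0
          (by rwa [← mem_ball_zero_iff])
        rw [Function.comp_apply, hMζ] at this
        have habs : ‖h z‖ ≤ ‖ζ‖ := by
          exact this
        have hζn : ‖ζ‖ = ‖z - u₀‖ / ‖1 - conj u₀ * z‖ := by rw [hζdef, norm_div]
        rw [hζn] at habs
        have hpos : 0 < ‖1 - conj u₀ * z‖ := norm_pos_iff.mpr hdz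
        calc ‖h z‖ * ‖1 - conj u₀ * z‖ ≤ ‖z - u₀‖ / ‖1 - conj u₀ * z‖ * ‖1 - conj u₀ * z‖ :=
              mul_le_mul_of_nonneg_right habs (norm_nonneg _)
          _ = ‖z - u₀‖ := div_mul_cancel₀ _ hpos.ne'
      -- the reduced function B₁
      set B₁ : ℂ → ℂ := fun z => dslope h u₀ z * (1 - conj u₀ * z) with hB₁
      have hkey : ∀ z : ℂ, B₁ z * (z - u₀) = h z * (1 - conj u₀ * z) := by
        intro z
        rcases eq_or_ne z u₀ with rfl | hne
        · simp [hB₁, hh0]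
        · rw [hB₁]
          simp only
          rw [dslope_of_ne _ hne, slope_def_field, hh0]
          field_simp [sub_ne_zero.mpr hne]
          ring
      have hB₁d : DifferentiableOn ℂ B₁ (ball (0:ℂ) 1) := by
        apply DifferentiableOn.mul
        · exact (Complex.differentiableOn_dslope (isOpen_ball.mem_nhds hu₀)).mpr hhd
        · exact (differentiableOn_const 1).sub ((differentiableOn_const (conj u₀)).mul
            differentiableOn_id)
      have hne' : ∀ z ∈ ball (0:ℂ) 1, z ≠ u₀ → ‖B₁ z‖ ≤ 1 := by
        intro z hz hne
        have h1 := hSP z hz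
        have h3 : ‖B₁ z‖ * ‖z - u₀‖ = ‖h z‖ * ‖1 - conj u₀ * z‖ := by
          rw [← norm_mul, ← norm_mul, hkey z]
        have hpos : 0 < ‖z - u₀‖ := norm_pos_iff.mpr (sub_ne_zero.mpr hne)
        have h4 : ‖B₁ z‖ * ‖z - u₀‖ ≤ 1 * ‖z - u₀‖ := by
          rw [h3, one_mul]; exact h1
        exact le_of_mul_le_mul_right h4 hpos
      have hB₁u₀ : ‖B₁ u₀‖ ≤ 1 := by
        have hc : ContinuousAt B₁ u₀ :=
          (hB₁d.differentiableAt (isOpen_ball.mem_nhds hu₀)).continuousAt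
        have hev : ∀ᶠ w in nhdsWithin u₀ {u₀}ᶜ, ‖B₁ w‖ ≤ 1 := by
          filter_upwards [mem_nhdsWithin_of_mem_nhds (isOpen_ball.mem_nhds hu₀),
            self_mem_nhdsWithin] with w hw hw'
          exact hne' w hw (by simpa using hw')
        exact le_of_tendsto (hc.norm.tendsto.mono_left nhdsWithin_le_nhds) hev
      have hB₁le : ∀ z ∈ ball (0:ℂ) 1, ‖B₁ z‖ ≤ 1 := by
        intro z hz
        rcases eq_or_ne z u₀ with hzeq | hne
        · rw [hzeq]; exact hB₁u₀
        · exact hne' z hz hne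
      -- vectors for the rank-one part and new coefficients
      set A : Fin (n+1) → ℂ := fun i => (((1:ℂ) + conj b₀ * h (u i)) * (1 - conj u₀ * u i))⁻¹
        with hA
      set E : Fin (n+1) → ℂ := fun i =>
        (u i - u₀) / ((1 - conj u₀ * u i) * (1 + conj b₀ * h (u i))) with hE
      set d : Fin (n+1) → ℂ := fun i => c i * conj (E i) with hd
      have hD1 : ∀ i : Fin (n+1), (1:ℂ) + conj b₀ * h (u i) ≠ 0 := by
        intro i
        apply one_add_ne
        rw [norm_mul, RCLike.norm_conj]
        nlinarith [norm_nonneg b₀, norm_nonneg (h (u i)), hhlt _ (hu i)]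
      have ha1 : ∀ i : Fin (n+1), (1:ℂ) - conj u₀ * u i ≠ 0 := by
        intro i
        apply one_sub_ne
        rw [norm_mul, RCLike.norm_conj]
        nlinarith [norm_nonneg u₀, norm_nonneg (u i), hun i]
      have hterm : ∀ i j : Fin (n+1),
          (1 - B (u j) * conj (B (u i))) / (1 - u j * conj (u i))
            = ((1 - b₀ * conj b₀) * (1 - u₀ * conj u₀)) * (conj (A i) * A j)
              + (1 - b₀ * conj b₀) * (conj (E i) * (E j *
                  ((1 - B₁ (u j) * conj (B₁ (u i))) / (1 - u j * conj (u i))))) := by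
        intro i j
        have h1 : h (u j) * (1 - conj b₀ * B (u j)) = B (u j) - b₀ := by
          rw [hh]; exact div_mul_cancel₀ _ (hden _ (hu j))
        have h1' : h (u i) * (1 - conj b₀ * B (u i)) = B (u i) - b₀ := by
          rw [hh]; exact div_mul_cancel₀ _ (hden _ (hu i))
        have h2 : conj (h (u i)) * (1 - b₀ * conj (B (u i)))
            = conj (B (u i)) - conj b₀ := by
          have := congrArg (starRingEnd ℂ) h1'
          simpa [map_mul, map_sub, map_one, Complex.conj_conj] using this
        have h3 := hkey (u j)
        have h4 : conj (B₁ (u i)) * (conj (u i) - conj u₀)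
            = conj (h (u i)) * (1 - u₀ * conj (u i)) := by
          have := congrArg (starRingEnd ℂ) (hkey (u i))
          simpa [map_mul, map_sub, map_one, Complex.conj_conj] using this
        have hzw : (1:ℂ) - u j * conj (u i) ≠ 0 := by
          apply one_sub_ne
          rw [norm_mul, RCLike.norm_conj]
          nlinarith [norm_nonneg (u j), norm_nonneg (u i), hun i, hun j]
        have hD2 : (1:ℂ) + b₀ * conj (h (u i)) ≠ 0 := by
          apply one_add_ne
          rw [norm_mul, RCLike.norm_conj, mul_comm]
          nlinarith [norm_nonneg b₀, norm_nonneg (h (u i)), hhlt _ (hu i)]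
        have ha2 : (1:ℂ) - u₀ * conj (u i) ≠ 0 := by
          apply one_sub_ne
          rw [norm_mul, RCLike.norm_conj, mul_comm]
          nlinarith [norm_nonneg u₀, norm_nonneg (u i), hun i]
        have KI := key_identity (u j) (conj (u i)) (B (u j)) (conj (B (u i)))
          (h (u j)) (conj (h (u i))) b₀ (conj b₀) u₀ (conj u₀)
          (B₁ (u j)) (conj (B₁ (u i))) h1 h2 h3 h4 hzw (hD1 j) hD2 (ha1 j) ha2
        rw [KI, hA, hE]
        simp only [map_inv₀, map_mul, map_sub, map_add, map_one, map_div₀, Complex.conj_conj]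
      have split : (∑ i, ∑ j, c i * conj (c j) *
            ((1 - B (u j) * conj (B (u i))) / (1 - u j * conj (u i))))
          = ((1 - b₀ * conj b₀) * (1 - u₀ * conj u₀)) *
              (∑ i, ∑ j, c i * conj (c j) * (conj (A i) * A j))
            + (1 - b₀ * conj b₀) * (∑ i, ∑ j, d i * conj (d j) *
                ((1 - B₁ (u j) * conj (B₁ (u i))) / (1 - u j * conj (u i)))) := by
        rw [Finset.mul_sum, Finset.mul_sum, ← Finset.sum_add_distrib]
        refine Finset.sum_congr rfl fun i _ => ?_
        rw [Finset.mul_sum, Finset.mul_sum, ← Finset.sum_add_distrib]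
        refine Finset.sum_congr rfl fun j _ => ?_
        rw [hterm i j, hd]
        simp only [map_mul, Complex.conj_conj]
        ring
      have hd0 : d 0 = 0 := by
        rw [hd]
        simp only [hE, ← hu₀def, sub_self, zero_div, map_zero, mul_zero]
      have hS2 : (0:ℂ) ≤ 1 - b₀ * conj b₀ := by
        rw [Complex.mul_conj]
        have hcast : (1:ℂ) - (normSq b₀ : ℂ) = ((1 - normSq b₀ : ℝ) : ℂ) := by push_cast; ring
        rw [hcast]
        exact Complex.zero_le_real.mpr (by nlinarith [normSq_lt_one hb₀])
      have hS1 : (0:ℂ) ≤ (1 - b₀ * conj b₀) * (1 - u₀ * conj u₀) := by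
        apply mul_nonneg hS2
        rw [Complex.mul_conj]
        have hcast : (1:ℂ) - (normSq u₀ : ℂ) = ((1 - normSq u₀ : ℝ) : ℂ) := by push_cast; ring
        rw [hcast]
        exact Complex.zero_le_real.mpr (by nlinarith [normSq_lt_one hu₀n])
      have hpos1 : (0:ℂ) ≤ ∑ i, ∑ j, c i * conj (c j) * (conj (A i) * A j) :=
        sum_rank_one c A
      have hred : (∑ i, ∑ j, d i * conj (d j) *
            ((1 - B₁ (u j) * conj (B₁ (u i))) / (1 - u j * conj (u i))))
          = ∑ i : Fin n, ∑ j : Fin n, (d ∘ Fin.succ) i * conj ((d ∘ Fin.succ) j) *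
              ((1 - B₁ ((u ∘ Fin.succ) j) * conj (B₁ ((u ∘ Fin.succ) i))) /
                (1 - (u ∘ Fin.succ) j * conj ((u ∘ Fin.succ) i))) := by
        rw [Fin.sum_univ_succ]
        simp only [hd0, map_zero, zero_mul, mul_zero, Finset.sum_const_zero, zero_add]
        refine Finset.sum_congr rfl fun i _ => ?_
        rw [Fin.sum_univ_succ]
        simp only [hd0, map_zero, zero_mul, mul_zero, zero_add, Function.comp_apply]
      have hpos2 : (0:ℂ) ≤ ∑ i, ∑ j, d i * conj (d j) *
          ((1 - B₁ (u j) * conj (B₁ (u i))) / (1 - u j * conj (u i))) := by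
        rw [hred]
        exact IH B₁ hB₁d hB₁le (u ∘ Fin.succ) (d ∘ Fin.succ) (fun i => hu _)
      rw [split]
      exact add_nonneg (mul_nonneg hS1 hpos1) (mul_nonneg hS2 hpos2)
    · -- maximum modulus case: B is a constant of modulus one
      push_neg at hstrict
      obtain ⟨z₀, hz₀, hge⟩ := hstrict
      have heq : ‖B z₀‖ = 1 := le_antisymm (hB1 _ hz₀) hge
      have hconst : Set.EqOn B (Function.const ℂ (B z₀)) (ball (0:ℂ) 1) := by
        apply Complex.eqOn_of_isPreconnected_of_isMaxOn_norm
          (convex_ball (0:ℂ) 1).isPreconnected isOpen_ball hBd hz₀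
        intro z hz
        simp only [Function.comp_apply]
        calc ‖B z‖ ≤ 1 := hB1 z hz
          _ = ‖B z₀‖ := heq.symm
      have hterm : ∀ i j : Fin (n+1),
          (1 - B (u j) * conj (B (u i))) / (1 - u j * conj (u i)) = 0 := by
        intro i j
        have h1 : B (u j) = B z₀ := hconst (hu j)
        have h2 : B (u i) = B z₀ := hconst (hu i)
        rw [h1, h2, Complex.mul_conj]
        have : normSq (B z₀) = 1 := by
          have := Complex.sq_norm (B z₀)
          nlinarith
        rw [this]
        simp
      have : ∀ i j : Fin (n+1), c i * conj (c j) *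
          ((1 - B (u j) * conj (B (u i))) / (1 - u j * conj (u i))) = 0 := by
        intro i j; rw [hterm i j, mul_zero]
      calc (0:ℂ) = ∑ i, ∑ j, (0:ℂ) := by simp
        _ ≤ _ := by
            apply le_of_eq
            refine Finset.sum_congr rfl fun i _ => Finset.sum_congr rfl fun j _ => ?_
            rw [this i j]


lemma norm_le_of_normSq_le {x y : ℂ} (h : normSq x ≤ normSq y) : ‖x‖ ≤ ‖y‖ := by
  rw [Complex.norm_def, Complex.norm_def]
  exact Real.sqrt_le_sqrt h

lemma cayley_identity (Z W P Q : ℂ) (h1 : Z + W ≠ 0) (h2 : Z + 1 ≠ 0) (h3 : W + 1 ≠ 0)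
    (h4 : P + 1 ≠ 0) (h5 : Q + 1 ≠ 0) :
    (P + Q) / (Z + W)
      = (Q + 1) / (W + 1) * ((P + 1) / (Z + 1) *
          ((1 - (P - 1) / (P + 1) * ((Q - 1) / (Q + 1))) /
            (1 - (Z - 1) / (Z + 1) * ((W - 1) / (W + 1))))) := by
  have hz : (1:ℂ) - (Z - 1) / (Z + 1) * ((W - 1) / (W + 1)) = 2*(Z+W)/((Z+1)*(W+1)) := by
    field_simp; ring
  have hp : (1:ℂ) - (P - 1) / (P + 1) * ((Q - 1) / (Q + 1)) = 2*(P+Q)/((P+1)*(Q+1)) := by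
    field_simp; ring
  rw [hz, hp]
  have hne : 2*(Z+W)/((Z+1)*(W+1)) ≠ 0 := by
    apply div_ne_zero
    · simpa using h1
    · exact mul_ne_zero h2 h3
  field_simp

end KOP

/-- If `φ : H → H` is holomorphic and `λ = sup Re z / Re φ(z)` is finite and
positive, then the kernel `K¹` is positive on `H × H`. -/
theorem K_one_pos (φ : ℂ → ℂ) (hφd : DifferentiableOn ℂ φ Hs) (hφm : MapsTo φ Hs Hs)
    (lam : ℝ) (hlam : 0 < lam)
    (hsup : IsLUB {r | ∃ z ∈ Hs, r = z.re / (φ z).re} lam) :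
    PosKernel (Kn φ lam 1) := by
  intro n c x hx
  set ψ : ℂ → ℂ := fun z => (lam : ℂ) * φ z - z with hψ
  have hlamC : ((lam : ℂ)) ≠ 0 := Complex.ofReal_ne_zero.mpr hlam.ne'
  have hψre : ∀ z ∈ Hs, 0 ≤ (ψ z).re := by
    intro z hz
    have hφz : 0 < (φ z).re := hφm hz
    have hub : z.re / (φ z).re ≤ lam := hsup.1 ⟨z, hz, rfl⟩
    have hzr : z.re ≤ lam * (φ z).re := by
      rw [div_le_iff₀ hφz] at hub; linarith
    have hre : (ψ z).re = lam * (φ z).re - z.re := by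
      simp [hψ, Complex.mul_re]
    rw [hre]; linarith
  have hψd : DifferentiableOn ℂ ψ Hs :=
    ((differentiableOn_const _).mul hφd).sub differentiableOn_id
  have hz1 : ∀ z ∈ Hs, z + 1 ≠ 0 := by
    intro z hz h0
    have h1 : (z + 1).re = 0 := by rw [h0]; simp
    have h2 : 0 < z.re := hz
    simp [Complex.add_re] at h1
    linarith
  have hψ1 : ∀ z ∈ Hs, ψ z + 1 ≠ 0 := by
    intro z hz h0
    have h1 : (ψ z + 1).re = 0 := by rw [h0]; simp
    have h2 := hψre z hz
    simp [Complex.add_re] at h1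
    linarith
  have hzw : ∀ z ∈ Hs, ∀ w ∈ Hs, z + conj w ≠ 0 := by
    intro z hz w hw h0
    have h1 : (z + conj w).re = 0 := by rw [h0]; simp
    have h2 : 0 < z.re := hz
    have h3 : 0 < w.re := hw
    simp [Complex.add_re, Complex.conj_re] at h1
    linarith
  set cay : ℂ → ℂ := fun z => (z - 1) / (z + 1) with hcay
  set cayInv : ℂ → ℂ := fun u => (1 + u) / (1 - u) with hcayInv
  have hcayball : ∀ z ∈ Hs, ‖cay z‖ < 1 := by
    intro z hz
    rw [hcay]; simp only
    rw [norm_div, div_lt_one (norm_pos_iff.mpr (hz1 z hz))]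
    apply KOP.norm_lt_of_normSq_lt
    simp only [Complex.normSq_apply, Complex.add_re, Complex.add_im, Complex.sub_re,
      Complex.sub_im, Complex.one_re, Complex.one_im]
    have h2 : 0 < z.re := hz
    nlinarith
  have honeu : ∀ u ∈ Metric.ball (0:ℂ) 1, (1:ℂ) - u ≠ 0 := fun u hu =>
    KOP.one_sub_ne u (mem_ball_zero_iff.mp hu)
  have hcayInvHs : ∀ u ∈ Metric.ball (0:ℂ) 1, cayInv u ∈ Hs := by
    intro u hu
    have h1 : (1:ℂ) - u ≠ 0 := honeu u hu
    have h2 : normSq u < 1 := KOP.normSq_lt_one (mem_ball_zero_iff.mp hu)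
    show 0 < (cayInv u).re
    rw [hcayInv]; simp only
    rw [Complex.div_re, ← add_div]
    apply div_pos ?_ (Complex.normSq_pos.mpr h1)
    simp only [Complex.add_re, Complex.add_im, Complex.sub_re, Complex.sub_im,
      Complex.one_re, Complex.one_im, Complex.normSq_apply]
    nlinarith [h2, Complex.normSq_apply u]
  have hinv : ∀ z ∈ Hs, cayInv (cay z) = z := by
    intro z hz
    have h1 := hz1 z hz
    rw [hcay, hcayInv]; simp only
    have e1 : (1:ℂ) + (z - 1)/(z + 1) = 2*z/(z + 1) := by field_simp; ring
    have e2 : (1:ℂ) - (z - 1)/(z + 1) = 2/(z + 1) := by field_simp; norm_num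
    rw [e1, e2]
    field_simp
  set B : ℂ → ℂ := fun u => (ψ (cayInv u) - 1) / (ψ (cayInv u) + 1) with hB
  have hBd : DifferentiableOn ℂ B (Metric.ball (0:ℂ) 1) := by
    have hcid : DifferentiableOn ℂ cayInv (Metric.ball (0:ℂ) 1) :=
      DifferentiableOn.div ((differentiableOn_const 1).add differentiableOn_id)
        ((differentiableOn_const 1).sub differentiableOn_id) honeu
    have hψc : DifferentiableOn ℂ (fun u => ψ (cayInv u)) (Metric.ball (0:ℂ) 1) :=
      hψd.comp hcid hcayInvHs
    exact (hψc.sub (differentiableOn_const 1)).div (hψc.add (differentiableOn_const 1))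
      (fun u hu => hψ1 _ (hcayInvHs u hu))
  have hB1 : ∀ u ∈ Metric.ball (0:ℂ) 1, ‖B u‖ ≤ 1 := by
    intro u hu
    have hzz := hcayInvHs u hu
    have hre := hψre _ hzz
    have hden : ψ (cayInv u) + 1 ≠ 0 := hψ1 _ hzz
    rw [hB]; simp only
    rw [norm_div, div_le_one (norm_pos_iff.mpr hden)]
    apply KOP.norm_le_of_normSq_le
    simp only [Complex.normSq_apply, Complex.add_re, Complex.add_im, Complex.sub_re,
      Complex.sub_im, Complex.one_re, Complex.one_im]
    nlinarith
  have hterm : ∀ w ∈ Hs, ∀ z ∈ Hs, Kn φ lam 1 w z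
      = ((lam : ℂ))⁻¹ * (conj ((ψ w + 1)/(w + 1)) * (((ψ z + 1)/(z + 1)) *
          ((1 - B (cay z) * conj (B (cay w))) / (1 - cay z * conj (cay w))))) := by
    intro w hw z hz
    have hBz : B (cay z) = (ψ z - 1) / (ψ z + 1) := by
      rw [hB]; simp only; rw [hinv z hz]
    have hBw : B (cay w) = (ψ w - 1) / (ψ w + 1) := by
      rw [hB]; simp only; rw [hinv w hw]
    rw [hBz, hBw, hcay]
    simp only [Kn, pow_one, map_div₀, map_add, map_sub, map_one, Complex.conj_conj]
    have hW1 : conj w + 1 ≠ 0 := by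
      have := hz1 w hw
      rw [show conj w + 1 = conj (w + 1) by rw [map_add, map_one], starRingEnd_apply]
      exact star_ne_zero.mpr this
    have hQ1 : conj (ψ w) + 1 ≠ 0 := by
      have := hψ1 w hw
      rw [show conj (ψ w) + 1 = conj (ψ w + 1) by rw [map_add, map_one], starRingEnd_apply]
      exact star_ne_zero.mpr this
    rw [← KOP.cayley_identity z (conj w) (ψ z) (conj (ψ w)) (hzw z hz w hw)
      (hz1 z hz) hW1 (hψ1 z hz) hQ1]
    have hnum : (lam : ℂ)⁻¹ * (ψ z + conj (ψ w))
        = φ z + conj (φ w) - (lam : ℂ)⁻¹ * (z + conj w) := by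
      rw [hψ]; simp only [map_sub, map_mul, Complex.conj_ofReal]
      field_simp
      ring
    rw [mul_div_assoc' ((lam : ℂ))⁻¹, hnum]
  set d : Fin n → ℂ := fun i => c i * conj ((ψ (x i) + 1)/(x i + 1)) with hd
  set v : Fin n → ℂ := fun i => cay (x i) with hv
  have hsum : (∑ i, ∑ j, c i * conj (c j) * Kn φ lam 1 (x i) (x j))
      = ((lam : ℂ))⁻¹ * ∑ i, ∑ j, d i * conj (d j) *
          ((1 - B (v j) * conj (B (v i))) / (1 - v j * conj (v i))) := by
    rw [Finset.mul_sum]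
    refine Finset.sum_congr rfl fun i _ => ?_
    rw [Finset.mul_sum]
    refine Finset.sum_congr rfl fun j _ => ?_
    rw [hterm (x i) (hx i) (x j) (hx j), hd, hv]
    simp only [map_mul, map_div₀, map_add, map_one, Complex.conj_conj]
    ring
  have h0 : (0:ℂ) ≤ ∑ i, ∑ j, c i * conj (c j) * Kn φ lam 1 (x i) (x j) := by
    rw [hsum]
    apply mul_nonneg
    · rw [show ((lam : ℂ))⁻¹ = ((lam⁻¹ : ℝ) : ℂ) by push_cast; ring]
      exact Complex.zero_le_real.mpr (inv_nonneg.mpr hlam.le)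
    · exact KOP.disk_pick n B hBd hB1 v d
        (fun i => mem_ball_zero_iff.mpr (hcayball _ (hx i)))
  obtain ⟨h1, h2⟩ := Complex.le_def.mp h0
  constructor
  · simpa using h1
  · simpa using h2.symm
end
end

section
/- Let φ : H → H be holomorphic with finite angular derivative 0 < λ < ∞ at infinity. Define Kⁿ(w,z) = ((φ(z) + conj(φ(w)))ⁿ − λ⁻ⁿ(z + conj(w))ⁿ)/(z + conj(w))ⁿ. Then for every natural number n ≥ 0, the kernel K^{2ⁿ} is positive on H × H. -/
noncomputable section
open MeasureTheory Complex Set Filter Topology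

section Aux
open scoped ComplexOrder
open Metric

lemma conj_form {N : ℕ} (M : Matrix (Fin N) (Fin N) ℂ)
    (h : ∀ c : Fin N → ℂ, (∑ i, ∑ j, c i * (starRingEnd ℂ) (c j) * M i j).im = 0) :
    ∀ c d : Fin N → ℂ,
      (∑ i, ∑ j, d i * (starRingEnd ℂ) (c j) * M i j)
        = (starRingEnd ℂ) (∑ i, ∑ j, c i * (starRingEnd ℂ) (d j) * M i j) := by
  intro c d
  set B : (Fin N → ℂ) → (Fin N → ℂ) → ℂ :=
    fun u v => ∑ i, ∑ j, u i * (starRingEnd ℂ) (v j) * M i j with hB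
  have expand : ∀ (a : ℂ) (u v : Fin N → ℂ),
      B (fun k => u k + a * v k) (fun k => u k + a * v k)
        = B u u + (starRingEnd ℂ) a * B u v + a * B v u + a * (starRingEnd ℂ) a * B v v := by
    intro a u v
    simp only [hB, map_add, map_mul, Finset.mul_sum, ← Finset.sum_add_distrib]
    refine Finset.sum_congr rfl fun i _ => Finset.sum_congr rfl fun j _ => by ring
  have h1 := h (fun k => c k + 1 * d k)
  have h2 := h (fun k => c k + I * d k)
  have hc := h c
  have hd := h d
  change (B _ _).im = 0 at h1 h2
  change (B c c).im = 0 at hc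
  change (B d d).im = 0 at hd
  rw [expand 1 c d] at h1
  rw [expand I c d] at h2
  simp only [map_one, one_mul, Complex.conj_I, Complex.add_im, Complex.mul_im, Complex.neg_re,
    Complex.neg_im, Complex.I_re, Complex.I_im, Complex.mul_re] at h1 h2
  change B d c = (starRingEnd ℂ) (B c d)
  apply Complex.ext
  · simp only [Complex.conj_re]; nlinarith [h1, h2, hc, hd]
  · simp only [Complex.conj_im]; nlinarith [h1, h2, hc, hd]

lemma exists_gram {N : ℕ} (M : Matrix (Fin N) (Fin N) ℂ)
    (h : ∀ c : Fin N → ℂ, 0 ≤ (∑ i, ∑ j, c i * (starRingEnd ℂ) (c j) * M i j).re ∧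
      (∑ i, ∑ j, c i * (starRingEnd ℂ) (c j) * M i j).im = 0) :
    ∃ B : Matrix (Fin N) (Fin N) ℂ,
      ∀ i j, M i j = ∑ k, (starRingEnd ℂ) (B k i) * B k j := by
  have hconj := conj_form M (fun c => (h c).2)
  have hsingle : ∀ i j : Fin N,
      (∑ p, ∑ q, (fun k => if k = i then (1:ℂ) else 0) p
          * (starRingEnd ℂ) ((fun k => if k = j then (1:ℂ) else 0) q) * M p q)
        = M i j := by
    intro i j
    simp [apply_ite (starRingEnd ℂ), ite_mul, mul_ite, Finset.sum_ite_eq,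
      Finset.sum_ite_eq']
  have hherm : M.IsHermitian := by
    ext i j
    have := hconj (fun k => if k = j then (1:ℂ) else 0) (fun k => if k = i then (1:ℂ) else 0)
    rw [hsingle i j, hsingle j i] at this
    simpa [Matrix.conjTranspose_apply] using this.symm
  have hps : M.PosSemidef := by
    refine Matrix.PosSemidef.of_dotProduct_mulVec_nonneg hherm fun x => ?_
    have key : dotProduct (star x) (Matrix.mulVec M x)
        = ∑ i, ∑ j, (star x) i * (starRingEnd ℂ) ((star x) j) * M i j := by
      simp only [dotProduct, Matrix.mulVec, dotProduct, Finset.mul_sum]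
      refine Finset.sum_congr rfl fun i _ => Finset.sum_congr rfl fun j _ => ?_
      simp only [Pi.star_apply, RCLike.star_def, RingHomCompTriple.comp_apply,
        RingHom.id_apply, Complex.conj_conj]
      ring
    rw [key, Complex.le_def]
    have := h (star x)
    exact ⟨by simpa using this.1, by simpa using this.2.symm⟩
  obtain ⟨B, hBe⟩ : ∃ B : Matrix (Fin N) (Fin N) ℂ, M = B.conjTranspose * B := by
    open scoped MatrixOrder in
    obtain ⟨B, hB⟩ := CStarAlgebra.nonneg_iff_eq_star_mul_self.mp hps.nonneg
    exact ⟨B, hB⟩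
  refine ⟨B, fun i j => ?_⟩
  have := congrFun (congrFun hBe i) j
  rw [this]
  simp [Matrix.mul_apply, Matrix.conjTranspose_apply, RCLike.star_def]


lemma PosKernel.congr {K L : ℂ → ℂ → ℂ} (hK : PosKernel K)
    (h : ∀ w ∈ Hs, ∀ z ∈ Hs, K w z = L w z) : PosKernel L := by
  intro n c x hx
  have : (∑ i, ∑ j, c i * (starRingEnd ℂ) (c j) * L (x i) (x j))
      = ∑ i, ∑ j, c i * (starRingEnd ℂ) (c j) * K (x i) (x j) := by
    refine Finset.sum_congr rfl fun i _ => Finset.sum_congr rfl fun j _ => ?_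
    rw [h (x i) (hx i) (x j) (hx j)]
  rw [this]; exact hK n c x hx

lemma PosKernel.add {K L : ℂ → ℂ → ℂ} (hK : PosKernel K) (hL : PosKernel L) :
    PosKernel (fun w z => K w z + L w z) := by
  intro n c x hx
  have e : (∑ i, ∑ j, c i * (starRingEnd ℂ) (c j) * (K (x i) (x j) + L (x i) (x j)))
      = (∑ i, ∑ j, c i * (starRingEnd ℂ) (c j) * K (x i) (x j))
        + (∑ i, ∑ j, c i * (starRingEnd ℂ) (c j) * L (x i) (x j)) := by
    rw [← Finset.sum_add_distrib]
    refine Finset.sum_congr rfl fun i _ => ?_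
    rw [← Finset.sum_add_distrib]
    exact Finset.sum_congr rfl fun j _ => by ring
  obtain ⟨h1, h2⟩ := hK n c x hx
  obtain ⟨h3, h4⟩ := hL n c x hx
  constructor
  · simp only [e, Complex.add_re]; linarith
  · simp only [e, Complex.add_im]; linarith

lemma PosKernel.smul {K : ℂ → ℂ → ℂ} (hK : PosKernel K) {t : ℝ} (ht : 0 ≤ t) :
    PosKernel (fun w z => (t : ℂ) * K w z) := by
  intro n c x hx
  have e : (∑ i, ∑ j, c i * (starRingEnd ℂ) (c j) * ((t:ℂ) * K (x i) (x j)))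
      = (t:ℂ) * ∑ i, ∑ j, c i * (starRingEnd ℂ) (c j) * K (x i) (x j) := by
    rw [Finset.mul_sum]
    refine Finset.sum_congr rfl fun i _ => ?_
    rw [Finset.mul_sum]
    exact Finset.sum_congr rfl fun j _ => by ring
  obtain ⟨h1, h2⟩ := hK n c x hx
  constructor
  · rw [e, Complex.mul_re, Complex.ofReal_re, Complex.ofReal_im]
    nlinarith
  · rw [e, Complex.mul_im, Complex.ofReal_re, Complex.ofReal_im]
    nlinarith

lemma PosKernel.sq {K : ℂ → ℂ → ℂ} (hK : PosKernel K) :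
    PosKernel (fun w z => K w z * K w z) := by
  intro n c x hx
  set M : Matrix (Fin n) (Fin n) ℂ := fun i j => K (x i) (x j) with hM
  obtain ⟨B, hB⟩ := exists_gram M (fun d => hK n d x hx)
  set z : Fin n → Fin n → ℂ :=
    fun k l => ∑ i, c i * (starRingEnd ℂ) (B k i * B l i) with hz
  have key : (∑ i, ∑ j, c i * (starRingEnd ℂ) (c j) * (K (x i) (x j) * K (x i) (x j)))
      = ∑ k, ∑ l, z k l * (starRingEnd ℂ) (z k l) := by
    have e1 : ∀ i j, c i * (starRingEnd ℂ) (c j) * (K (x i) (x j) * K (x i) (x j))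
        = ∑ k, ∑ l, (c i * (starRingEnd ℂ) (B k i * B l i))
            * (starRingEnd ℂ) (c j * (starRingEnd ℂ) (B k j * B l j)) := by
      intro i j
      have : K (x i) (x j) = ∑ k, (starRingEnd ℂ) (B k i) * B k j := hB i j
      rw [this, Finset.sum_mul_sum]
      rw [Finset.mul_sum]
      refine Finset.sum_congr rfl fun k _ => ?_
      rw [Finset.mul_sum]
      refine Finset.sum_congr rfl fun l _ => ?_
      simp only [map_mul, Complex.conj_conj]
      ring
    calc (∑ i, ∑ j, c i * (starRingEnd ℂ) (c j) * (K (x i) (x j) * K (x i) (x j)))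
        = ∑ i, ∑ j, ∑ k, ∑ l, (c i * (starRingEnd ℂ) (B k i * B l i))
            * (starRingEnd ℂ) (c j * (starRingEnd ℂ) (B k j * B l j)) := by
          exact Finset.sum_congr rfl fun i _ => Finset.sum_congr rfl fun j _ => e1 i j
      _ = ∑ p : Fin n × Fin n, ∑ q : Fin n × Fin n,
            (c p.1 * (starRingEnd ℂ) (B q.1 p.1 * B q.2 p.1))
              * (starRingEnd ℂ) (c p.2 * (starRingEnd ℂ) (B q.1 p.2 * B q.2 p.2)) := by
          rw [Fintype.sum_prod_type]
          refine Finset.sum_congr rfl fun i _ => ?_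
          refine Finset.sum_congr rfl fun j _ => ?_
          rw [Fintype.sum_prod_type]
      _ = ∑ q : Fin n × Fin n, ∑ p : Fin n × Fin n,
            (c p.1 * (starRingEnd ℂ) (B q.1 p.1 * B q.2 p.1))
              * (starRingEnd ℂ) (c p.2 * (starRingEnd ℂ) (B q.1 p.2 * B q.2 p.2)) :=
          Finset.sum_comm
      _ = ∑ k, ∑ l, z k l * (starRingEnd ℂ) (z k l) := by
          rw [Fintype.sum_prod_type]
          refine Finset.sum_congr rfl fun k _ => Finset.sum_congr rfl fun l _ => ?_
          rw [Fintype.sum_prod_type]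
          dsimp only
          rw [← Finset.sum_mul_sum]
          rw [hz]
          simp only [map_sum]
  rw [key]
  have e2 : (∑ k, ∑ l, z k l * (starRingEnd ℂ) (z k l))
      = ((∑ k, ∑ l, Complex.normSq (z k l) : ℝ) : ℂ) := by
    push_cast
    exact Finset.sum_congr rfl fun k _ => Finset.sum_congr rfl fun l _ =>
      (Complex.mul_conj _)
  rw [e2]
  constructor
  · rw [Complex.ofReal_re]
    exact Finset.sum_nonneg fun k _ => Finset.sum_nonneg fun l _ => Complex.normSq_nonneg _
  · rw [Complex.ofReal_im]


lemma add_conj_ne_zero {w z : ℂ} (hw : w ∈ Hs) (hz : z ∈ Hs) :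
    z + (starRingEnd ℂ) w ≠ 0 := by
  intro h
  have : (z + (starRingEnd ℂ) w).re = 0 := by rw [h]; simp
  rw [Complex.add_re, Complex.conj_re] at this
  have h1 : 0 < z.re := hz
  have h2 : 0 < w.re := hw
  linarith

lemma Kn_double (φ : ℂ → ℂ) {lam : ℝ} (hlam : 0 < lam) (m : ℕ)
    {w z : ℂ} (hw : w ∈ Hs) (hz : z ∈ Hs) :
    Kn φ lam (2*m) w z
      = Kn φ lam m w z * Kn φ lam m w z
        + ((2*(lam^m)⁻¹ : ℝ) : ℂ) * Kn φ lam m w z := by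
  have hD : (z + (starRingEnd ℂ) w) ≠ 0 := add_conj_ne_zero hw hz
  have hDm : (z + (starRingEnd ℂ) w)^m ≠ 0 := pow_ne_zero _ hD
  have hlm : ((lam:ℂ))^m ≠ 0 := pow_ne_zero _ (by exact_mod_cast hlam.ne')
  unfold Kn
  rw [pow_mul', pow_mul', pow_mul']
  push_cast
  field_simp
  ring


/-- Cauchy reproducing formula against the Szegő kernel. -/
lemma rep (q : ℂ → ℂ) (hq : ∀ ζ ∈ closedBall (0:ℂ) 1, DifferentiableAt ℂ q ζ)
    (α : ℂ) (hα : ‖α‖ < 1) :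
    ∫ θ in (0:ℝ)..(2*Real.pi),
        q (circleMap 0 1 θ) * (starRingEnd ℂ) ((1 - (starRingEnd ℂ) α * circleMap 0 1 θ)⁻¹)
      = (2*Real.pi : ℝ) * q α := by
  have hdc : DiffContOnCl ℂ q (ball (0:ℂ) 1) := by
    constructor
    · exact fun ζ hζ => (hq ζ (ball_subset_closedBall hζ)).differentiableWithinAt
    · rw [closure_ball (0:ℂ) one_ne_zero]
      exact fun ζ hζ => (hq ζ hζ).continuousAt.continuousWithinAt
  have hmem : α ∈ ball (0:ℂ) 1 := by simpa [mem_ball_zero_iff] using hα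
  have hC := hdc.circleIntegral_sub_inv_smul hmem
  rw [circleIntegral] at hC
  simp only [deriv_circleMap, smul_eq_mul] at hC
  have hptw : ∀ θ : ℝ,
      q (circleMap 0 1 θ) * (starRingEnd ℂ) ((1 - (starRingEnd ℂ) α * circleMap 0 1 θ)⁻¹)
        = circleMap 0 1 θ * (circleMap 0 1 θ - α)⁻¹ * q (circleMap 0 1 θ) := by
    intro θ
    have he : circleMap 0 1 θ ≠ 0 := circleMap_ne_center one_ne_zero
    have hconj : (starRingEnd ℂ) (circleMap 0 1 θ) = (circleMap 0 1 θ)⁻¹ := by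
      rw [Complex.inv_def, show Complex.normSq (circleMap 0 1 θ) = 1 by
        rw [Complex.normSq_eq_norm_sq, norm_circleMap_zero]; norm_num]
      simp
    rw [map_inv₀, map_sub, map_one, map_mul, Complex.conj_conj, hconj]
    rw [show (1 - α * (circleMap 0 1 θ)⁻¹) = (circleMap 0 1 θ)⁻¹ * (circleMap 0 1 θ - α) by
      field_simp]
    rw [mul_inv, inv_inv]
    ring
  have key : I * ∫ θ in (0:ℝ)..(2*Real.pi),
      q (circleMap 0 1 θ) * (starRingEnd ℂ) ((1 - (starRingEnd ℂ) α * circleMap 0 1 θ)⁻¹)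
      = I * ((2*Real.pi : ℝ) * q α) := by
    rw [← intervalIntegral.integral_const_mul]
    have : (∫ θ in (0:ℝ)..(2*Real.pi),
        I * (q (circleMap 0 1 θ) * (starRingEnd ℂ) ((1 - (starRingEnd ℂ) α * circleMap 0 1 θ)⁻¹)))
        = ∫ θ in (0:ℝ)..(2*Real.pi),
          circleMap 0 1 θ * I * ((circleMap 0 1 θ - α)⁻¹ * q (circleMap 0 1 θ)) := by
      refine intervalIntegral.integral_congr fun θ _ => ?_
      rw [hptw θ]; ring
    rw [this, hC]
    push_cast
    ring
  exact mul_left_cancel₀ I_ne_zero key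

lemma disk_pos_r (F : ℂ → ℂ) (hFd : ∀ ζ ∈ ball (0:ℂ) 1, DifferentiableAt ℂ F ζ)
    (hF1 : ∀ ζ ∈ ball (0:ℂ) 1, ‖F ζ‖ ≤ 1)
    {N : ℕ} (s a : Fin N → ℂ) (ha : ∀ i, ‖a i‖ < 1)
    (r : ℝ) (hr : r ∈ Ioo (0:ℝ) 1) :
    0 ≤ (∑ i, ∑ j, s i * (starRingEnd ℂ) (s j) *
        ((1 - F (r * a i) * (starRingEnd ℂ) (F (r * a j))) / (1 - a i * (starRingEnd ℂ) (a j)))).re ∧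
    (∑ i, ∑ j, s i * (starRingEnd ℂ) (s j) *
        ((1 - F (r * a i) * (starRingEnd ℂ) (F (r * a j))) / (1 - a i * (starRingEnd ℂ) (a j)))).im = 0 := by
  have hr0 : (0:ℝ) < r := hr.1
  have hr1 : r < 1 := hr.2
  set g : ℂ → ℂ := fun ζ => ∑ j, (starRingEnd ℂ) (s j) * (1 - (starRingEnd ℂ) (a j) * ζ)⁻¹ with hgdef
  set wf : ℂ → ℂ := fun ζ => ∑ j, (starRingEnd ℂ) (s j) * (starRingEnd ℂ) (F (r * a j)) * (1 - (starRingEnd ℂ) (a j) * ζ)⁻¹ with hwdef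
  set Fr : ℂ → ℂ := fun ζ => F (r * ζ) with hFrdef
  -- basic nonvanishing
  have hne : ∀ ζ ∈ closedBall (0:ℂ) 1, ∀ j : Fin N, (1 - (starRingEnd ℂ) (a j) * ζ) ≠ 0 := by
    intro ζ hζ j h
    have h1 : ‖(starRingEnd ℂ) (a j) * ζ‖ < 1 := by
      rw [norm_mul, Complex.norm_conj]
      have hζ1 : ‖ζ‖ ≤ 1 := by simpa using mem_closedBall_zero_iff.mp hζ
      calc ‖a j‖ * ‖ζ‖ ≤ ‖a j‖ * 1 :=
            mul_le_mul_of_nonneg_left hζ1 (norm_nonneg _)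
        _ < 1 := by simpa using ha j
    have : (starRingEnd ℂ) (a j) * ζ = 1 := by linear_combination -h
    rw [this] at h1; simp at h1
  have hker_diff : ∀ (j : Fin N), ∀ ζ ∈ closedBall (0:ℂ) 1,
      DifferentiableAt ℂ (fun ζ => (1 - (starRingEnd ℂ) (a j) * ζ)⁻¹) ζ := by
    intro j ζ hζ
    exact (((differentiable_const (1:ℂ)).sub ((differentiable_id).const_mul _)).differentiableAt).inv
      (hne ζ hζ j)
  have hg_diff : ∀ ζ ∈ closedBall (0:ℂ) 1, DifferentiableAt ℂ g ζ := by
    intro ζ hζ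
    exact DifferentiableAt.fun_sum fun j _ => ((hker_diff j ζ hζ).const_mul _)
  have hw_diff : ∀ ζ ∈ closedBall (0:ℂ) 1, DifferentiableAt ℂ wf ζ := by
    intro ζ hζ
    exact DifferentiableAt.fun_sum fun j _ => ((hker_diff j ζ hζ).const_mul _)
  have hrball : ∀ ζ ∈ closedBall (0:ℂ) 1, (r:ℂ) * ζ ∈ ball (0:ℂ) 1 := by
    intro ζ hζ
    rw [mem_ball_zero_iff]
    have : ‖(r:ℂ) * ζ‖ = r * ‖ζ‖ := by
      rw [norm_mul, Complex.norm_real, Real.norm_eq_abs, abs_of_pos hr0]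
    rw [show ‖(r:ℂ) * ζ‖ = ‖(r:ℂ)*ζ‖ from rfl, this]
    have hζ1 : ‖ζ‖ ≤ 1 := by simpa using mem_closedBall_zero_iff.mp hζ
    nlinarith
  have hFr_diff : ∀ ζ ∈ closedBall (0:ℂ) 1, DifferentiableAt ℂ Fr ζ := by
    intro ζ hζ
    exact (hFd _ (hrball ζ hζ)).comp ζ ((differentiable_id).const_mul _).differentiableAt
  have hFr_le : ∀ ζ ∈ closedBall (0:ℂ) 1, ‖Fr ζ‖ ≤ 1 := by
    intro ζ hζ
    exact hF1 _ (hrball ζ hζ)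
  have hmema : ∀ i, a i ∈ closedBall (0:ℂ) 1 := by
    intro i
    rw [mem_closedBall_zero_iff]
    exact le_of_lt (by simpa using ha i)
  -- continuity of boundary functions
  have hcont : ∀ (q : ℂ → ℂ), (∀ ζ ∈ closedBall (0:ℂ) 1, DifferentiableAt ℂ q ζ) →
      Continuous (fun θ : ℝ => q (circleMap 0 1 θ)) := by
    intro q hq
    rw [continuous_iff_continuousAt]
    intro θ
    have hmem : circleMap 0 1 θ ∈ closedBall (0:ℂ) 1 := by
      rw [mem_closedBall_zero_iff, show ‖circleMap 0 1 θ‖ = ‖circleMap 0 1 θ‖ from rfl,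
        norm_circleMap_zero]
      norm_num
    exact ((hq _ hmem).continuousAt).comp (continuous_circleMap 0 1).continuousAt
  -- the two pairing computations
  have pair1 : ∀ (q : ℂ → ℂ), (∀ ζ ∈ closedBall (0:ℂ) 1, DifferentiableAt ℂ q ζ) →
      ∫ θ in (0:ℝ)..(2*Real.pi), q (circleMap 0 1 θ) * (starRingEnd ℂ) (g (circleMap 0 1 θ))
        = (2*Real.pi : ℝ) * ∑ i, s i * q (a i) := by
    intro q hq
    have e1 : ∀ θ : ℝ, q (circleMap 0 1 θ) * (starRingEnd ℂ) (g (circleMap 0 1 θ))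
        = ∑ i, s i * (q (circleMap 0 1 θ) * (starRingEnd ℂ) ((1 - (starRingEnd ℂ) (a i) * circleMap 0 1 θ)⁻¹)) := by
      intro θ
      rw [hgdef]
      simp only [map_sum, map_mul, Complex.conj_conj, Finset.mul_sum]
      exact Finset.sum_congr rfl fun i _ => by ring
    rw [intervalIntegral.integral_congr (fun θ _ => e1 θ)]
    rw [intervalIntegral.integral_finset_sum]
    · have : ∀ i : Fin N, (∫ θ in (0:ℝ)..(2*Real.pi),
          s i * (q (circleMap 0 1 θ) * (starRingEnd ℂ) ((1 - (starRingEnd ℂ) (a i) * circleMap 0 1 θ)⁻¹)))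
          = s i * ((2*Real.pi : ℝ) * q (a i)) := by
        intro i
        rw [intervalIntegral.integral_const_mul, rep q hq (a i) (ha i)]
      rw [Finset.sum_congr rfl fun i _ => this i, Finset.mul_sum]
      exact Finset.sum_congr rfl fun i _ => by ring
    · intro i _
      apply Continuous.intervalIntegrable
      apply continuous_const.mul
      apply (hcont q hq).mul
      apply Continuous.comp continuous_conj
      apply Continuous.inv₀
      · exact (continuous_const.sub (continuous_const.mul (continuous_circleMap 0 1)))
      · intro θ
        refine hne (circleMap 0 1 θ) ?_ i
        rw [mem_closedBall_zero_iff, show ‖circleMap 0 1 θ‖ = ‖circleMap 0 1 θ‖ from rfl,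
          norm_circleMap_zero]
        norm_num
  have pair2 : ∀ (q : ℂ → ℂ), (∀ ζ ∈ closedBall (0:ℂ) 1, DifferentiableAt ℂ q ζ) →
      ∫ θ in (0:ℝ)..(2*Real.pi), q (circleMap 0 1 θ) * (starRingEnd ℂ) (wf (circleMap 0 1 θ))
        = (2*Real.pi : ℝ) * ∑ i, s i * F (r * a i) * q (a i) := by
    intro q hq
    have e1 : ∀ θ : ℝ, q (circleMap 0 1 θ) * (starRingEnd ℂ) (wf (circleMap 0 1 θ))
        = ∑ i, (s i * F (r * a i)) *
            (q (circleMap 0 1 θ) * (starRingEnd ℂ) ((1 - (starRingEnd ℂ) (a i) * circleMap 0 1 θ)⁻¹)) := by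
      intro θ
      rw [hwdef]
      simp only [map_sum, map_mul, Complex.conj_conj, Finset.mul_sum]
      exact Finset.sum_congr rfl fun i _ => by ring
    rw [intervalIntegral.integral_congr (fun θ _ => e1 θ)]
    rw [intervalIntegral.integral_finset_sum]
    · have : ∀ i : Fin N, (∫ θ in (0:ℝ)..(2*Real.pi),
          (s i * F (r * a i)) * (q (circleMap 0 1 θ) * (starRingEnd ℂ) ((1 - (starRingEnd ℂ) (a i) * circleMap 0 1 θ)⁻¹)))
          = (s i * F (r * a i)) * ((2*Real.pi : ℝ) * q (a i)) := by
        intro i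
        rw [intervalIntegral.integral_const_mul, rep q hq (a i) (ha i)]
      rw [Finset.sum_congr rfl fun i _ => this i, Finset.mul_sum]
      exact Finset.sum_congr rfl fun i _ => by ring
    · intro i _
      apply Continuous.intervalIntegrable
      apply continuous_const.mul
      apply (hcont q hq).mul
      apply Continuous.comp continuous_conj
      apply Continuous.inv₀
      · exact (continuous_const.sub (continuous_const.mul (continuous_circleMap 0 1)))
      · intro θ
        refine hne (circleMap 0 1 θ) ?_ i
        rw [mem_closedBall_zero_iff, show ‖circleMap 0 1 θ‖ = ‖circleMap 0 1 θ‖ from rfl,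
          norm_circleMap_zero]
        norm_num
  -- boundary continuity
  have cg := hcont g hg_diff
  have cw := hcont wf hw_diff
  have hFrw_diff : ∀ ζ ∈ closedBall (0:ℂ) 1, DifferentiableAt ℂ (fun ζ => Fr ζ * wf ζ) ζ :=
    fun ζ hζ => (hFr_diff ζ hζ).mul (hw_diff ζ hζ)
  have cfw := hcont (fun ζ => Fr ζ * wf ζ) hFrw_diff
  have hA := pair1 g hg_diff
  have hCC := pair1 (fun ζ => Fr ζ * wf ζ) hFrw_diff
  have hB := pair2 wf hw_diff
  have hBC : (∫ θ in (0:ℝ)..(2*Real.pi), wf (circleMap 0 1 θ) * (starRingEnd ℂ) (wf (circleMap 0 1 θ)))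
      = ∫ θ in (0:ℝ)..(2*Real.pi),
          (Fr (circleMap 0 1 θ) * wf (circleMap 0 1 θ)) * (starRingEnd ℂ) (g (circleMap 0 1 θ)) := by
    rw [hB, hCC]
    congr 1
    exact Finset.sum_congr rfl fun i _ => by rw [hFrdef]; ring
  -- convert to real integrals
  have contA : Continuous fun θ : ℝ => g (circleMap 0 1 θ) * (starRingEnd ℂ) (g (circleMap 0 1 θ)) :=
    cg.mul (continuous_conj.comp cg)
  have contB : Continuous fun θ : ℝ => wf (circleMap 0 1 θ) * (starRingEnd ℂ) (wf (circleMap 0 1 θ)) :=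
    cw.mul (continuous_conj.comp cw)
  have contC : Continuous fun θ : ℝ =>
      (Fr (circleMap 0 1 θ) * wf (circleMap 0 1 θ)) * (starRingEnd ℂ) (g (circleMap 0 1 θ)) :=
    cfw.mul (continuous_conj.comp cg)
  have reInt : ∀ (f : ℝ → ℂ), Continuous f →
      (∫ θ in (0:ℝ)..(2*Real.pi), f θ).re = ∫ θ in (0:ℝ)..(2*Real.pi), (f θ).re := by
    intro f hf
    have := Complex.reCLM.intervalIntegral_comp_comm
      (hf.intervalIntegrable (μ := MeasureTheory.volume) (0:ℝ) (2*Real.pi))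
    simp only [Complex.reCLM_apply] at this
    exact this.symm
  have imInt : ∀ (f : ℝ → ℂ), Continuous f →
      (∫ θ in (0:ℝ)..(2*Real.pi), f θ).im = ∫ θ in (0:ℝ)..(2*Real.pi), (f θ).im := by
    intro f hf
    have := Complex.imCLM.intervalIntegral_comp_comm
      (hf.intervalIntegrable (μ := MeasureTheory.volume) (0:ℝ) (2*Real.pi))
    simp only [Complex.imCLM_apply] at this
    exact this.symm
  have memS : ∀ θ : ℝ, circleMap 0 1 θ ∈ closedBall (0:ℂ) 1 := by
    intro θ
    rw [mem_closedBall_zero_iff, show ‖circleMap 0 1 θ‖ = ‖circleMap 0 1 θ‖ from rfl,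
      norm_circleMap_zero]
    norm_num
  -- pointwise inequality
  have keyptw : ∀ θ : ℝ,
      ((Fr (circleMap 0 1 θ) * wf (circleMap 0 1 θ)) * (starRingEnd ℂ) (g (circleMap 0 1 θ))).re
        ≤ (Complex.normSq (wf (circleMap 0 1 θ)) + Complex.normSq (g (circleMap 0 1 θ)))/2 := by
    intro θ
    set u := wf (circleMap 0 1 θ)
    set v := g (circleMap 0 1 θ)
    set fr := Fr (circleMap 0 1 θ)
    have h1 : ((fr * u) * (starRingEnd ℂ) v).re ≤ ‖(fr * u) * (starRingEnd ℂ) v‖ :=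
      Complex.re_le_norm _
    have h2 : ‖(fr * u) * (starRingEnd ℂ) v‖
        = ‖fr‖ * ‖u‖ * ‖v‖ := by
      rw [norm_mul, norm_mul, Complex.norm_conj]
    have h3 : ‖fr‖ ≤ 1 := hFr_le _ (memS θ)
    have h4 : ‖fr‖ * ‖u‖ * ‖v‖ ≤ ‖u‖ * ‖v‖ := by
      have huv : 0 ≤ ‖u‖ * ‖v‖ :=
        mul_nonneg (norm_nonneg u) (norm_nonneg v)
      calc ‖fr‖ * ‖u‖ * ‖v‖
          = ‖fr‖ * (‖u‖ * ‖v‖) := by ring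
        _ ≤ 1 * (‖u‖ * ‖v‖) := mul_le_mul_of_nonneg_right h3 huv
        _ = ‖u‖ * ‖v‖ := one_mul _
    have h5 : ‖u‖ * ‖v‖
        ≤ (Complex.normSq u + Complex.normSq v)/2 := by
      rw [← Complex.sq_norm, ← Complex.sq_norm]
      nlinarith [sq_nonneg (‖u‖ - ‖v‖)]
    linarith
  have eqB : (∫ θ in (0:ℝ)..(2*Real.pi),
      (wf (circleMap 0 1 θ) * (starRingEnd ℂ) (wf (circleMap 0 1 θ))).re)
      = ∫ θ in (0:ℝ)..(2*Real.pi), Complex.normSq (wf (circleMap 0 1 θ)) := by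
    refine intervalIntegral.integral_congr fun θ _ => ?_
    rw [Complex.mul_conj, Complex.ofReal_re]
  have eqA : (∫ θ in (0:ℝ)..(2*Real.pi),
      (g (circleMap 0 1 θ) * (starRingEnd ℂ) (g (circleMap 0 1 θ))).re)
      = ∫ θ in (0:ℝ)..(2*Real.pi), Complex.normSq (g (circleMap 0 1 θ)) := by
    refine intervalIntegral.integral_congr fun θ _ => ?_
    rw [Complex.mul_conj, Complex.ofReal_re]
  have contw2 : Continuous fun θ : ℝ => Complex.normSq (wf (circleMap 0 1 θ)) :=
    Complex.continuous_normSq.comp cw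
  have contg2 : Continuous fun θ : ℝ => Complex.normSq (g (circleMap 0 1 θ)) :=
    Complex.continuous_normSq.comp cg
  have reBC : (∫ θ in (0:ℝ)..(2*Real.pi),
        wf (circleMap 0 1 θ) * (starRingEnd ℂ) (wf (circleMap 0 1 θ))).re
      ≤ (∫ θ in (0:ℝ)..(2*Real.pi),
        g (circleMap 0 1 θ) * (starRingEnd ℂ) (g (circleMap 0 1 θ))).re := by
    have hBre : (∫ θ in (0:ℝ)..(2*Real.pi),
        wf (circleMap 0 1 θ) * (starRingEnd ℂ) (wf (circleMap 0 1 θ))).re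
        = ∫ θ in (0:ℝ)..(2*Real.pi), Complex.normSq (wf (circleMap 0 1 θ)) := by
      rw [reInt _ contB]; exact eqB
    have hAre : (∫ θ in (0:ℝ)..(2*Real.pi),
        g (circleMap 0 1 θ) * (starRingEnd ℂ) (g (circleMap 0 1 θ))).re
        = ∫ θ in (0:ℝ)..(2*Real.pi), Complex.normSq (g (circleMap 0 1 θ)) := by
      rw [reInt _ contA]; exact eqA
    have step1 : (∫ θ in (0:ℝ)..(2*Real.pi),
        ((Fr (circleMap 0 1 θ) * wf (circleMap 0 1 θ)) * (starRingEnd ℂ) (g (circleMap 0 1 θ))).re)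
        ≤ ∫ θ in (0:ℝ)..(2*Real.pi),
          (Complex.normSq (wf (circleMap 0 1 θ)) + Complex.normSq (g (circleMap 0 1 θ)))/2 := by
      refine intervalIntegral.integral_mono_on (by positivity) ?_ ?_ (fun θ _ => keyptw θ)
      · exact ((Complex.continuous_re.comp contC)).intervalIntegrable _ _
      · exact ((contw2.add contg2).div_const 2).intervalIntegrable _ _
    have step2 : (∫ θ in (0:ℝ)..(2*Real.pi),
          (Complex.normSq (wf (circleMap 0 1 θ)) + Complex.normSq (g (circleMap 0 1 θ)))/2)
        = ((∫ θ in (0:ℝ)..(2*Real.pi), Complex.normSq (wf (circleMap 0 1 θ)))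
          + (∫ θ in (0:ℝ)..(2*Real.pi), Complex.normSq (g (circleMap 0 1 θ))))/2 := by
      rw [intervalIntegral.integral_div,
        intervalIntegral.integral_add (contw2.intervalIntegrable _ _) (contg2.intervalIntegrable _ _)]
    have step0 : (∫ θ in (0:ℝ)..(2*Real.pi),
        wf (circleMap 0 1 θ) * (starRingEnd ℂ) (wf (circleMap 0 1 θ))).re
        = (∫ θ in (0:ℝ)..(2*Real.pi),
          ((Fr (circleMap 0 1 θ) * wf (circleMap 0 1 θ)) * (starRingEnd ℂ) (g (circleMap 0 1 θ))).re) := by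
      rw [hBC, reInt _ contC]
    rw [hBre, hAre]
    rw [hBre] at step0
    rw [step2] at step1
    linarith
  -- imaginary parts vanish
  have imA0 : (∫ θ in (0:ℝ)..(2*Real.pi),
      g (circleMap 0 1 θ) * (starRingEnd ℂ) (g (circleMap 0 1 θ))).im = 0 := by
    rw [imInt _ contA]
    have : ∀ θ ∈ uIcc (0:ℝ) (2*Real.pi),
        (g (circleMap 0 1 θ) * (starRingEnd ℂ) (g (circleMap 0 1 θ))).im = (0:ℝ) := by
      intro θ _
      rw [Complex.mul_conj, Complex.ofReal_im]
    rw [intervalIntegral.integral_congr this]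
    simp
  have imB0 : (∫ θ in (0:ℝ)..(2*Real.pi),
      wf (circleMap 0 1 θ) * (starRingEnd ℂ) (wf (circleMap 0 1 θ))).im = 0 := by
    rw [imInt _ contB]
    have : ∀ θ ∈ uIcc (0:ℝ) (2*Real.pi),
        (wf (circleMap 0 1 θ) * (starRingEnd ℂ) (wf (circleMap 0 1 θ))).im = (0:ℝ) := by
      intro θ _
      rw [Complex.mul_conj, Complex.ofReal_im]
    rw [intervalIntegral.integral_congr this]
    simp
  -- pass to the discrete sums
  set S1 : ℂ := ∑ i, s i * g (a i) with hS1
  set S2 : ℂ := ∑ i, s i * F (↑r * a i) * wf (a i) with hS2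
  rw [hA] at reBC imA0
  rw [hB] at reBC imB0
  have hπ : (0:ℝ) < 2*Real.pi := by positivity
  have hreS : S2.re ≤ S1.re := by
    simp only [Complex.mul_re, Complex.ofReal_re, Complex.ofReal_im, zero_mul, sub_zero] at reBC
    nlinarith
  have himS1 : S1.im = 0 := by
    simp only [Complex.mul_im, Complex.ofReal_re, Complex.ofReal_im, zero_mul, add_zero] at imA0
    rcases mul_eq_zero.mp imA0 with h | h
    · linarith
    · exact h
  have himS2 : S2.im = 0 := by
    simp only [Complex.mul_im, Complex.ofReal_re, Complex.ofReal_im, zero_mul, add_zero] at imB0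
    rcases mul_eq_zero.mp imB0 with h | h
    · linarith
    · exact h
  -- identify the quadratic form
  have hSig : (∑ i, ∑ j, s i * (starRingEnd ℂ) (s j) *
        ((1 - F (↑r * a i) * (starRingEnd ℂ) (F (↑r * a j))) / (1 - a i * (starRingEnd ℂ) (a j))))
      = S1 - S2 := by
    rw [hS1, hS2, hgdef, hwdef]
    simp only [Finset.mul_sum]
    rw [← Finset.sum_sub_distrib]
    refine Finset.sum_congr rfl fun i _ => ?_
    rw [← Finset.sum_sub_distrib]
    refine Finset.sum_congr rfl fun j _ => ?_
    rw [show (1:ℂ) - (starRingEnd ℂ) (a j) * a i = 1 - a i * (starRingEnd ℂ) (a j) from by ring]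
    ring
  rw [hSig]
  constructor
  · rw [Complex.sub_re]; linarith
  · rw [Complex.sub_im, himS1, himS2]; ring

lemma disk_pos (F : ℂ → ℂ) (hFd : ∀ ζ ∈ ball (0:ℂ) 1, DifferentiableAt ℂ F ζ)
    (hF1 : ∀ ζ ∈ ball (0:ℂ) 1, ‖F ζ‖ ≤ 1)
    {N : ℕ} (s a : Fin N → ℂ) (ha : ∀ i, ‖a i‖ < 1) :
    0 ≤ (∑ i, ∑ j, s i * (starRingEnd ℂ) (s j) *
        ((1 - F (a i) * (starRingEnd ℂ) (F (a j))) / (1 - a i * (starRingEnd ℂ) (a j)))).re ∧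
    (∑ i, ∑ j, s i * (starRingEnd ℂ) (s j) *
        ((1 - F (a i) * (starRingEnd ℂ) (F (a j))) / (1 - a i * (starRingEnd ℂ) (a j)))).im = 0 := by
  set L := nhdsWithin (1:ℝ) (Ioo (0:ℝ) 1) with hL
  have hLne : L.NeBot := by
    refine mem_closure_iff_nhdsWithin_neBot.mp ?_
    rw [closure_Ioo (by norm_num : (0:ℝ) ≠ 1)]
    simp [mem_Icc]
  set f : ℝ → ℂ := fun r => ∑ i, ∑ j, s i * (starRingEnd ℂ) (s j) *
      ((1 - F (r*a i) * (starRingEnd ℂ) (F (r*a j))) / (1 - a i * (starRingEnd ℂ) (a j))) with hf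
  have hFt : ∀ k : Fin N, Tendsto (fun r : ℝ => F ((r:ℂ) * a k)) L (𝓝 (F (a k))) := by
    intro k
    have hca : ContinuousAt F (a k) :=
      (hFd (a k) (mem_ball_zero_iff.mpr (by simpa using ha k))).continuousAt
    have hc : Continuous fun r : ℝ => (r:ℂ) * a k :=
      Complex.continuous_ofReal.mul continuous_const
    have hmul : Tendsto (fun r : ℝ => (r:ℂ) * a k) L (𝓝 (a k)) := by
      have hle : L ≤ 𝓝 (1:ℝ) := nhdsWithin_le_nhds
      have := (hc.tendsto 1).mono_left hle
      simpa using this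
    exact hca.tendsto.comp hmul
  have htend : Tendsto f L (𝓝 (∑ i, ∑ j, s i * (starRingEnd ℂ) (s j) *
      ((1 - F (a i) * (starRingEnd ℂ) (F (a j))) / (1 - a i * (starRingEnd ℂ) (a j))))) := by
    refine tendsto_finset_sum _ fun i _ => tendsto_finset_sum _ fun j _ => ?_
    exact tendsto_const_nhds.mul
      ((tendsto_const_nhds.sub ((hFt i).mul ((continuous_conj.tendsto _).comp (hFt j)))).div_const _)
  have hev : ∀ᶠ r in L, 0 ≤ (f r).re ∧ (f r).im = 0 :=
    eventually_mem_nhdsWithin.mono (fun r hr => disk_pos_r F hFd hF1 s a ha r hr)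
  constructor
  · exact ge_of_tendsto ((Complex.continuous_re.tendsto _).comp htend)
      (hev.mono fun r h => h.1)
  · refine tendsto_nhds_unique ((Complex.continuous_im.tendsto _).comp htend) ?_
    exact (tendsto_congr' (hev.mono fun r h => h.2)).mpr tendsto_const_nhds


lemma isOpen_Hs : IsOpen Hs := isOpen_lt continuous_const Complex.continuous_re



lemma ne_neg_one_of_re_pos {z : ℂ} (hz : 0 < z.re) : z + 1 ≠ 0 := by
  intro h
  have : (z+1).re = 0 := by rw [h]; simp
  simp only [Complex.add_re, Complex.one_re] at this
  linarith

lemma ne_neg_one_of_re_nonneg {z : ℂ} (hz : 0 ≤ z.re) : z + 1 ≠ 0 := by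
  intro h
  have : (z+1).re = 0 := by rw [h]; simp
  simp only [Complex.add_re, Complex.one_re] at this
  linarith

lemma abs_cayley_lt_one {z : ℂ} (hz : 0 < z.re) : ‖(z-1)/(z+1)‖ < 1 := by
  rw [norm_div, div_lt_one (norm_pos_iff.mpr (ne_neg_one_of_re_pos hz))]
  rw [Complex.norm_def, Complex.norm_def]
  apply Real.sqrt_lt_sqrt (Complex.normSq_nonneg _)
  simp only [Complex.normSq_apply, Complex.sub_re, Complex.sub_im, Complex.add_re,
    Complex.add_im, Complex.one_re, Complex.one_im]
  nlinarith

lemma abs_cayley_le_one {z : ℂ} (hz : 0 ≤ z.re) : ‖(z-1)/(z+1)‖ ≤ 1 := by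
  rw [norm_div, div_le_one (norm_pos_iff.mpr (ne_neg_one_of_re_nonneg hz))]
  rw [Complex.norm_def, Complex.norm_def]
  apply Real.sqrt_le_sqrt
  simp only [Complex.normSq_apply, Complex.sub_re, Complex.sub_im, Complex.add_re,
    Complex.add_im, Complex.one_re, Complex.one_im]
  nlinarith

lemma inv_cayley_mem_Hs {ζ : ℂ} (hζ : ζ ∈ ball (0:ℂ) 1) : (1+ζ)/(1-ζ) ∈ Hs := by
  have h1 : ‖ζ‖ < 1 := by simpa using mem_ball_zero_iff.mp hζ
  have hnsq : Complex.normSq ζ < 1 := by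
    rw [← Complex.sq_norm]; nlinarith [norm_nonneg ζ]
  have hne : (1:ℂ) - ζ ≠ 0 := by
    intro h
    have : ζ = 1 := by linear_combination -h
    rw [this] at h1; simp at h1
  show 0 < ((1+ζ)/(1-ζ)).re
  rw [Complex.div_re]
  have hpos : 0 < Complex.normSq (1-ζ) := Complex.normSq_pos.mpr hne
  rw [← add_div, lt_div_iff₀ hpos, zero_mul]
  rw [Complex.normSq_apply] at hnsq
  simp only [Complex.add_re, Complex.add_im, Complex.sub_re, Complex.sub_im, Complex.one_re,
    Complex.one_im, Complex.normSq_apply]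
  nlinarith

lemma cayley_alg (Z W P Q : ℂ) (hZ : Z+1 ≠ 0) (hW : W+1 ≠ 0) (hP : P+1 ≠ 0) (hQ : Q+1 ≠ 0)
    (hZW : Z+W ≠ 0) :
    (P + Q)/(Z + W)
      = (1 - ((P-1)/(P+1)) * ((Q-1)/(Q+1))) / (1 - ((Z-1)/(Z+1)) * ((W-1)/(W+1)))
        * ((P+1)/(Z+1) * ((Q+1)/(W+1))) := by
  have hden : 1 - ((Z-1)/(Z+1)) * ((W-1)/(W+1)) = 2*(Z+W)/((Z+1)*(W+1)) := by
    field_simp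
    ring
  have hnum : 1 - ((P-1)/(P+1)) * ((Q-1)/(Q+1)) = 2*(P+Q)/((P+1)*(Q+1)) := by
    field_simp
    ring
  rw [hden, hnum]
  field_simp

section K1
variable (φ : ℂ → ℂ) (lam : ℝ)

def psi : ℂ → ℂ := fun z => φ z - z * (lam:ℂ)⁻¹

lemma K1_eq {w z : ℂ} (hw : w ∈ Hs) (hz : z ∈ Hs) :
    Kn φ lam 1 w z = (psi φ lam z + (starRingEnd ℂ) (psi φ lam w)) / (z + (starRingEnd ℂ) w) := by
  have hD : (z + (starRingEnd ℂ) w) ≠ 0 := add_conj_ne_zero hw hz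
  unfold Kn psi
  simp only [pow_one, map_sub, map_mul, map_inv₀, Complex.conj_ofReal]
  field_simp
  ring

end K1

theorem K1_pos (φ : ℂ → ℂ) (hφd : DifferentiableOn ℂ φ Hs) (hφm : Set.MapsTo φ Hs Hs)
    (lam : ℝ) (hlam : 0 < lam)
    (hsup : IsLUB {r | ∃ z ∈ Hs, r = z.re / (φ z).re} lam) :
    PosKernel (Kn φ lam 1) := by
  set ψ : ℂ → ℂ := psi φ lam with hψdef
  have hψre : ∀ z ∈ Hs, 0 ≤ (ψ z).re := by
    intro z hz
    have hφpos : 0 < (φ z).re := hφm hz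
    have hb : z.re / (φ z).re ≤ lam := hsup.1 ⟨z, hz, rfl⟩
    have hzle : z.re ≤ lam * (φ z).re := (div_le_iff₀ hφpos).mp hb
    have : (ψ z).re = (φ z).re - z.re * lam⁻¹ := by
      rw [hψdef]
      unfold psi
      simp [Complex.sub_re, Complex.mul_re, Complex.ofReal_inv, Complex.ofReal_re,
        Complex.ofReal_im]
    rw [this]
    have hinv : lam * lam⁻¹ = 1 := mul_inv_cancel₀ (ne_of_gt hlam)
    nlinarith [inv_pos.mpr hlam]
  have hψd : ∀ z ∈ Hs, DifferentiableAt ℂ ψ z := by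
    intro z hz
    have : DifferentiableAt ℂ φ z := hφd.differentiableAt (isOpen_Hs.mem_nhds hz)
    exact this.sub (differentiableAt_id.mul (differentiableAt_const _))
  -- the disk function
  set F : ℂ → ℂ := fun ζ => (ψ ((1+ζ)/(1-ζ)) - 1)/(ψ ((1+ζ)/(1-ζ)) + 1) with hFdef
  have hFd : ∀ ζ ∈ ball (0:ℂ) 1, DifferentiableAt ℂ F ζ := by
    intro ζ hζ
    have h1 : ‖ζ‖ < 1 := by simpa using mem_ball_zero_iff.mp hζ
    have hne : (1:ℂ) - ζ ≠ 0 := by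
      intro h
      have : ζ = 1 := by linear_combination -h
      rw [this] at h1; simp at h1
    have hvmem : (1+ζ)/(1-ζ) ∈ Hs := inv_cayley_mem_Hs hζ
    have hvd : DifferentiableAt ℂ (fun ζ : ℂ => (1+ζ)/(1-ζ)) ζ :=
      ((differentiable_const (1:ℂ)).add differentiable_id).differentiableAt.div
        (((differentiable_const (1:ℂ)).sub differentiable_id).differentiableAt) hne
    have hcomp : DifferentiableAt ℂ (fun ζ : ℂ => ψ ((1+ζ)/(1-ζ))) ζ :=
      by have := (hψd _ hvmem).comp ζ hvd; exact this
    have hdenne : ψ ((1+ζ)/(1-ζ)) + 1 ≠ 0 := ne_neg_one_of_re_nonneg (hψre _ hvmem)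
    exact ((hcomp.sub (differentiableAt_const 1)).div
      (hcomp.add (differentiableAt_const 1)) hdenne)
  have hF1 : ∀ ζ ∈ ball (0:ℂ) 1, ‖F ζ‖ ≤ 1 := by
    intro ζ hζ
    exact abs_cayley_le_one (hψre _ (inv_cayley_mem_Hs hζ))
  -- F ∘ cayley = cayley ∘ ψ
  have hFa : ∀ z ∈ Hs, F ((z-1)/(z+1)) = (ψ z - 1)/(ψ z + 1) := by
    intro z hz
    have hz1 : z + 1 ≠ 0 := ne_neg_one_of_re_pos hz
    have hva : (1+(z-1)/(z+1))/(1-(z-1)/(z+1)) = z := by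
      rw [show 1 + (z-1)/(z+1) = 2*z/(z+1) by field_simp; ring,
        show 1 - (z-1)/(z+1) = 2/(z+1) by field_simp; ring]
      field_simp
    rw [hFdef]
    simp only
    rw [hva]
  -- master pointwise formula
  have master : ∀ w ∈ Hs, ∀ z ∈ Hs,
      Kn φ lam 1 w z
        = (1 - F ((z-1)/(z+1)) * (starRingEnd ℂ) (F ((w-1)/(w+1))))
            / (1 - ((z-1)/(z+1)) * (starRingEnd ℂ) ((w-1)/(w+1)))
          * ((ψ z + 1)/(z+1) * (starRingEnd ℂ) ((ψ w + 1)/(w+1))) := by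
    intro w hw z hz
    rw [K1_eq φ lam hw hz, hFa z hz, hFa w hw]
    simp only [map_div₀, map_sub, map_add, map_one]
    have h1 : z + 1 ≠ 0 := ne_neg_one_of_re_pos hz
    have h2 : (starRingEnd ℂ) w + 1 ≠ 0 := by
      refine ne_neg_one_of_re_pos ?_
      rw [Complex.conj_re]; exact hw
    have h3 : ψ z + 1 ≠ 0 := ne_neg_one_of_re_nonneg (hψre z hz)
    have h4 : (starRingEnd ℂ) (ψ w) + 1 ≠ 0 := by
      refine ne_neg_one_of_re_nonneg ?_
      rw [Complex.conj_re]; exact hψre w hw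
    exact cayley_alg z ((starRingEnd ℂ) w) (ψ z) ((starRingEnd ℂ) (ψ w)) h1 h2 h3 h4
      (add_conj_ne_zero hw hz)
  -- assemble
  intro n c x hx
  set α : Fin n → ℂ := fun i => (x i - 1)/(x i + 1) with hα
  set s : Fin n → ℂ := fun i => (starRingEnd ℂ) (c i) * ((ψ (x i) + 1)/(x i + 1)) with hs
  have hαlt : ∀ i, ‖α i‖ < 1 := fun i => abs_cayley_lt_one (hx i)
  have key : (∑ i, ∑ j, c i * (starRingEnd ℂ) (c j) * Kn φ lam 1 (x i) (x j))
      = ∑ i, ∑ j, s i * (starRingEnd ℂ) (s j) *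
          ((1 - F (α i) * (starRingEnd ℂ) (F (α j))) / (1 - α i * (starRingEnd ℂ) (α j))) := by
    calc (∑ i, ∑ j, c i * (starRingEnd ℂ) (c j) * Kn φ lam 1 (x i) (x j))
        = ∑ i, ∑ j, s j * (starRingEnd ℂ) (s i) *
            ((1 - F (α j) * (starRingEnd ℂ) (F (α i))) / (1 - α j * (starRingEnd ℂ) (α i))) := by
          refine Finset.sum_congr rfl fun i _ => Finset.sum_congr rfl fun j _ => ?_
          rw [master (x i) (hx i) (x j) (hx j), hα, hs]
          simp only [map_mul, map_div₀, map_add, map_one, Complex.conj_conj]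
          ring
      _ = _ := Finset.sum_comm
  rw [key]
  exact disk_pos F hFd hF1 s α hαlt


end Aux

/-- If `φ : H → H` is holomorphic with finite angular derivative `0 < λ < ∞` at
infinity (i.e. `λ = sup Re z / Re φ(z)`), then `K^(2ⁿ)` is positive for every `n`. -/
theorem K_pow_two_pos (φ : ℂ → ℂ) (hφd : DifferentiableOn ℂ φ Hs) (hφm : MapsTo φ Hs Hs)
    (lam : ℝ) (hlam : 0 < lam)
    (hsup : IsLUB {r | ∃ z ∈ Hs, r = z.re / (φ z).re} lam) :
    ∀ n : ℕ, PosKernel (Kn φ lam (2^n)) := by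
  intro n
  induction n with
  | zero =>
    have := K1_pos φ hφd hφm lam hlam hsup
    simpa using this
  | succ k ih =>
    have hsq := ih.sq
    have hsm := ih.smul (t := 2*(lam^(2^k))⁻¹) (by positivity)
    have h1 := hsq.add hsm
    refine h1.congr (fun w hw z hz => ?_)
    have h2 := Kn_double φ hlam (2^k) hw hz
    rw [show (2:ℕ)^(k+1) = 2 * 2^k from by rw [pow_succ]; ring] 
    exact h2.symm
end
end

section
/- (Half-plane Julia–Carathéodory, partial) For a holomorphic φ : H → H, if sup_{z∈H} Re(z)/Re(φ(z)) = λ < ∞, then for every sequence zₙ = xₙ + i yₙ with xₙ → ∞ and |yₙ|/xₙ bounded, φ(zₙ) → ∞, i.e., φ fixes infinity non-tangentially. -/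
noncomputable section
open MeasureTheory Complex Set Filter Topology

/-- If `sup Re z / Re φ(z) = λ < ∞` then `φ` fixes `∞` non-tangentially: for any
sequence `zₙ ∈ H` with `Re zₙ → ∞` and `|Im zₙ|/Re zₙ` bounded, `|φ(zₙ)| → ∞`. -/
theorem fixes_infinity_nontangentially (φ : ℂ → ℂ)
    (hφd : DifferentiableOn ℂ φ Hs) (hφm : MapsTo φ Hs Hs)
    (lam : ℝ) (hsup : IsLUB {r | ∃ z ∈ Hs, r = z.re / (φ z).re} lam)
    (z : ℕ → ℂ) (hzH : ∀ n, z n ∈ Hs)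
    (hx : Tendsto (fun n => (z n).re) atTop atTop)
    (hy : ∃ C : ℝ, ∀ n, |(z n).im| / (z n).re ≤ C) :
    Tendsto (fun n => ‖φ (z n)‖) atTop atTop := by
  have hub : ∀ w ∈ Hs, w.re / (φ w).re ≤ lam := fun w hw =>
    hsup.1 ⟨w, hw, rfl⟩
  have h1 : (1 : ℂ) ∈ Hs := by simp [Hs]
  have hφ1 : 0 < (φ 1).re := hφm h1
  have hlam0 : 0 < lam := lt_of_lt_of_le (by simpa using div_pos one_pos hφ1 : (0:ℝ) < (1:ℂ).re / (φ 1).re) (hub 1 h1)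
  have key : ∀ n, (z n).re / lam ≤ ‖φ (z n)‖ := by
    intro n
    have hz := hzH n
    have hφz : 0 < (φ (z n)).re := hφm hz
    have h := hub (z n) hz
    have h2 : (z n).re / lam ≤ (φ (z n)).re := by
      rw [div_le_iff₀ hlam0]
      calc (z n).re = (z n).re / (φ (z n)).re * (φ (z n)).re := by
            field_simp
        _ ≤ lam * (φ (z n)).re := mul_le_mul_of_nonneg_right h hφz.le
        _ = (φ (z n)).re * lam := mul_comm _ _
      -- reorder
    calc (z n).re / lam ≤ (φ (z n)).re := h2
      _ ≤ |(φ (z n)).re| := le_abs_self _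
      _ ≤ ‖φ (z n)‖ := Complex.abs_re_le_norm _
  exact tendsto_atTop_mono key (Tendsto.atTop_div_const hlam0 hx)
end
end
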